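/- The Common Knowledge of Preconditions Theorem: Let G be a set of agents and, for each i ∈ G, let does_i be an action for agent i such that the family {does_i}_{i∈G} is necessarily simultaneous in the system R (for all i,j ∈ G, does_i is a necessary condition for does_j in R) and each does_i is a conscious action for i in R. If the fact ψ is a necessary condition for does_i in R for some i ∈ G, then ψ is common knowledge to G whenever any of the actions is performed: for every j ∈ G, every m ≥ 1, every sequence i_1, i_2, ..., i_m of agents from G, the nested-knowledge fact K_{i_1}(K_{i_2}(··· K_{i_m} ψ ···)) is a necessary condition for does_j in R. -/

import Mathlib

/-- Agent `i`'s knowledge operator in system `R` with local-state map `loc`. -/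
def K {Agent LState Run : Type*} (R : Set Run) (loc : Run → ℕ → Agent → LState)
    (i : Agent) (φ : Run → ℕ → Prop) : Run → ℕ → Prop :=
  fun r t => ∀ r' ∈ R, ∀ t' : ℕ, loc r' t' i = loc r t i → φ r' t'

/-- `ψ` is a necessary condition for the action `does` in system `R`. -/
def NecessaryFor {Run : Type*} (R : Set Run) (ψ does : Run → ℕ → Prop) : Prop :=
  ∀ r ∈ R, ∀ t : ℕ, does r t → ψ r t

/-- `does` is a conscious action for agent `i` in system `R`. -/
def Conscious {Agent LState Run : Type*} (R : Set Run) (loc : Run → ℕ → Agent → LState)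
    (i : Agent) (does : Run → ℕ → Prop) : Prop :=
  ∀ r ∈ R, ∀ r' ∈ R, ∀ t t' : ℕ, loc r t i = loc r' t' i → (does r t ↔ does r' t')

/-- The nested-knowledge fact `K_{i₁} K_{i₂} ⋯ K_{iₘ} ψ` for a list `[i₁,…,iₘ]`. -/
def Knest {Agent LState Run : Type*} (R : Set Run) (loc : Run → ℕ → Agent → LState)
    (l : List Agent) (ψ : Run → ℕ → Prop) : Run → ℕ → Prop :=
  l.foldr (fun i φ => K R loc i φ) ψ

/-- The Common Knowledge of Preconditions Theorem. -/
theorem common_knowledge_of_preconditions {Agent LState Run : Type*}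
    (R : Set Run) (loc : Run → ℕ → Agent → LState)
    (G : Set Agent) (does : Agent → Run → ℕ → Prop) (ψ : Run → ℕ → Prop)
    (hsimul : ∀ i ∈ G, ∀ j ∈ G, NecessaryFor R (does i) (does j))
    (hconscious : ∀ i ∈ G, Conscious R loc i (does i))
    (hnec : ∃ i ∈ G, NecessaryFor R ψ (does i)) :
    ∀ j ∈ G, ∀ l : List Agent, l ≠ [] → (∀ a ∈ l, a ∈ G) →
      NecessaryFor R (Knest R loc l ψ) (does j) := by
  obtain ⟨i, hiG, hi⟩ := hnec
  have main : ∀ l : List Agent, (∀ a ∈ l, a ∈ G) →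
      ∀ j ∈ G, NecessaryFor R (Knest R loc l ψ) (does j) := by
    intro l
    induction l with
    | nil =>
      intro _ j hj r hr t hd
      exact hi r hr t (hsimul i hiG j hj r hr t hd)
    | cons a l ih =>
      intro hmem j hj r hr t hd
      have haG : a ∈ G := hmem a List.mem_cons_self
      intro r' hr' t' hloc
      have hda : does a r t := hsimul a haG j hj r hr t hd
      have hda' : does a r' t' :=
        (hconscious a haG r' hr' r hr t' t hloc).mpr hda
      exact ih (fun b hb => hmem b (List.mem_cons_of_mem _ hb)) a haG r' hr' t' hda'
  intro j hj l _ hmem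
  exact main l hmem j hj
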